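/- arXiv:2103.00297 — 9 statements merged into one kernel-verified Lean document; each statement's English description precedes it below -/
import Mathlib

section
/- (Incremental Core Computation) Let A and B be disjoint finite sets with E = A ∪ B satisfying a monotonic criterion. Let A' ⊆ A be locally minimal such that A' ∪ B satisfies the criterion (i.e., check(A' ∪ B) holds but for every x ∈ A', check((A' \ {x}) ∪ B) fails), and let B' ⊆ B be locally minimal such that A' ∪ B' satisfies the criterion. Then A' ∪ B' is a core of E, i.e., check(A' ∪ B') holds and removing any single element from A' ∪ B' makes the criterion fail. -/
/-- Incremental Core Computation: minimizing `A` relative to `B`,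
then minimizing `B` relative to the result, yields a core of `E = A ∪ B`. -/
theorem incremental_core {α : Type*} [DecidableEq α]
    (check : Finset α → Prop) (A B E : Finset α)
    (hE : E = A ∪ B) (hdisj : Disjoint A B)
    (mono : ∀ X Y : Finset α, X ⊆ Y → Y ⊆ E → check X → check Y)
    (hcheckE : check E)
    (A' : Finset α) (hA'sub : A' ⊆ A)
    (hA'check : check (A' ∪ B))
    (hA'min : ∀ x ∈ A', ¬ check ((A'.erase x) ∪ B))
    (B' : Finset α) (hB'sub : B' ⊆ B)
    (hB'check : check (A' ∪ B'))
    (hB'min : ∀ x ∈ B', ¬ check (A' ∪ (B'.erase x))) :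
    check (A' ∪ B') ∧ ∀ x ∈ A' ∪ B', ¬ check ((A' ∪ B').erase x) := by
  refine ⟨hB'check, ?_⟩
  intro x hx hchk
  rcases Finset.mem_union.mp hx with hxA | hxB
  · apply hA'min x hxA
    refine mono _ _ ?_ ?_ hchk
    · intro y hy
      rcases Finset.mem_erase.mp hy with ⟨hyx, hy'⟩
      rcases Finset.mem_union.mp hy' with h | h
      · exact Finset.mem_union_left _ (Finset.mem_erase.mpr ⟨hyx, h⟩)
      · exact Finset.mem_union_right _ (hB'sub h)
    · rw [hE]
      exact Finset.union_subset_union (Finset.Subset.trans (Finset.erase_subset _ _) hA'sub) le_rfl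
  · apply hB'min x hxB
    refine mono _ _ ?_ ?_ hchk
    · intro y hy
      rcases Finset.mem_erase.mp hy with ⟨hyx, hy'⟩
      rcases Finset.mem_union.mp hy' with h | h
      · exact Finset.mem_union_left _ h
      · exact Finset.mem_union_right _ (Finset.mem_erase.mpr ⟨hyx, h⟩)
    · rw [hE]
      exact Finset.union_subset_union hA'sub
        (Finset.Subset.trans (Finset.erase_subset _ _) hB'sub)
end

section
/- Let E satisfy a monotonic criterion, let C₀ be a core of E, and let CI = {x ∈ C₀ | check(E \ {x}) fails}. Then CI equals the intersection of all cores of E. -/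
lemma exists_min_core {α : Type*} [DecidableEq α] (check : Finset α → Prop) :
    ∀ A : Finset α, check A → ∃ C ⊆ A, check C ∧ ∀ C' ⊂ C, ¬ check C' := by
  intro A
  induction A using Finset.strongInductionOn with
  | _ A ih =>
    intro hA
    by_cases h : ∃ C' ⊂ A, check C'
    · obtain ⟨C', hC'A, hC'⟩ := h
      obtain ⟨C, hCC', hC, hmin⟩ := ih C' hC'A hC'
      exact ⟨C, hCC'.trans hC'A.subset, hC, hmin⟩
    · push_neg at h
      exact ⟨A, subset_rfl, hA, h⟩

/-- Lemma 2: given a core `C₀` of `E`, the set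
`CI = {x ∈ C₀ | ¬check(E \ {x})}` equals the intersection of all cores of `E`. -/
theorem ci_eq_core_intersection {α : Type*} [DecidableEq α] (E : Finset α)
    (check : Finset α → Prop)
    (mono : ∀ A B : Finset α, A ⊆ B → B ⊆ E → check A → check B)
    (hE : check E)
    (C₀ : Finset α) (hC₀E : C₀ ⊆ E) (hC₀ : check C₀)
    (hC₀min : ∀ C' ⊂ C₀, ¬ check C') :
    ∀ x, (x ∈ C₀ ∧ ¬ check (E.erase x)) ↔
      (x ∈ E ∧ ∀ C : Finset α, C ⊆ E → check C → (∀ C' ⊂ C, ¬ check C') → x ∈ C) := by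
  intro x
  constructor
  · rintro ⟨hxC₀, hnc⟩
    refine ⟨hC₀E hxC₀, fun C hCE hC hCmin => ?_⟩
    by_contra hx
    exact hnc (mono C (E.erase x) (fun y hy => Finset.mem_erase.mpr
      ⟨fun h => hx (h ▸ hy), hCE hy⟩) (Finset.erase_subset _ _) hC)
  · rintro ⟨hxE, hall⟩
    refine ⟨hall C₀ hC₀E hC₀ hC₀min, fun hc => ?_⟩
    obtain ⟨C, hCE, hC, hmin⟩ := exists_min_core check (E.erase x) hc
    have := hall C (hCE.trans (Finset.erase_subset _ _)) hC hmin
    exact (Finset.mem_erase.mp (hCE this)).1 rfl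
end

section
/- Let E satisfy a monotonic criterion, let C₀ be a core of E, and let C be any core of E with C ≠ C₀. Then there exists x ∈ C₀ such that x ∉ C and check(E \ {x}) holds. -/
/-- if `C₀` and `C` are cores of `E` with `C ≠ C₀`, then some
`x ∈ C₀` satisfies `x ∉ C` and `check (E \ {x})`. -/
theorem punch_step {α : Type*} [DecidableEq α] (E : Finset α)
    (check : Finset α → Prop)
    (mono : ∀ A B : Finset α, A ⊆ B → B ⊆ E → check A → check B)
    (hE : check E)
    (C₀ : Finset α) (hC₀E : C₀ ⊆ E) (hC₀ : check C₀)
    (hC₀min : ∀ C' ⊂ C₀, ¬ check C')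
    (C : Finset α) (hCE : C ⊆ E) (hC : check C)
    (hCmin : ∀ C' ⊂ C, ¬ check C')
    (hne : C ≠ C₀) :
    ∃ x ∈ C₀, x ∉ C ∧ check (E.erase x) := by
  have hnsub : ¬ C₀ ⊆ C := by
    intro h
    rcases h.eq_or_ssubset with rfl | hss
    · exact hne rfl
    · exact hCmin C₀ hss hC₀
  obtain ⟨x, hx₀, hxC⟩ := Finset.not_subset.mp hnsub
  exact ⟨x, hx₀, hxC, mono C (E.erase x)
    (fun y hy => Finset.mem_erase.mpr ⟨fun h => hxC (h ▸ hy), hCE hy⟩)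
    (Finset.erase_subset _ _) hC⟩
end

section
/- Let Base and A be disjoint subsets of a finite set E with monotonic criterion check such that check(Base ∪ A) holds, and let A' ⊆ A be locally minimal with check(Base ∪ A') holding. If Base is a subset of every core of E, then Base ∪ A' is a core of E. -/
lemma exists_core_aux {α : Type*} [DecidableEq α]
    (check : Finset α → Prop) :
    ∀ n (C : Finset α), C.card = n → check C →
      ∃ D, D ⊆ C ∧ check D ∧ ∀ D' ⊂ D, ¬ check D' := by
  intro n
  induction n using Nat.strong_induction_on with
  | _ n ih =>
    intro C hcard hC
    by_cases h : ∀ D' ⊂ C, ¬ check D'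
    · exact ⟨C, subset_rfl, hC, h⟩
    · push_neg at h
      obtain ⟨D', hD'ssub, hD'⟩ := h
      obtain ⟨D, hDsub, hDc, hDmin⟩ :=
        ih D'.card (hcard ▸ Finset.card_lt_card hD'ssub) D' rfl hD'
      exact ⟨D, hDsub.trans hD'ssub.subset, hDc, hDmin⟩

/-- Prop. 2(i): minimization with a base: if `Base` is a subset
of every core of `E` and `A' ⊆ A` is locally minimal with `check (Base ∪ A')`,
then `Base ∪ A'` is a core of `E`. -/
theorem min_with_base_core {α : Type*} [DecidableEq α] (E : Finset α)
    (check : Finset α → Prop)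
    (mono : ∀ A B : Finset α, A ⊆ B → B ⊆ E → check A → check B)
    (Base A : Finset α) (hBaseE : Base ⊆ E) (hAE : A ⊆ E)
    (hdisj : Disjoint Base A) (hBA : check (Base ∪ A))
    (A' : Finset α) (hA'sub : A' ⊆ A)
    (hA'check : check (Base ∪ A'))
    (hA'min : ∀ x ∈ A', ¬ check (Base ∪ (A'.erase x)))
    (hBaseCores : ∀ C : Finset α, C ⊆ E → check C →
      (∀ C' ⊂ C, ¬ check C') → Base ⊆ C) :
    (Base ∪ A') ⊆ E ∧ check (Base ∪ A') ∧ ∀ C' ⊂ Base ∪ A', ¬ check C' := by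
  have hUE : Base ∪ A' ⊆ E := Finset.union_subset hBaseE ((hA'sub.trans hAE))
  refine ⟨hUE, hA'check, ?_⟩
  intro C' hC'ssub hC'
  obtain ⟨D, hDsub, hDc, hDmin⟩ := exists_core_aux check C'.card C' rfl hC'
  have hDE : D ⊆ E := hDsub.trans (hC'ssub.subset.trans hUE)
  have hBaseD : Base ⊆ D := hBaseCores D hDE hDc hDmin
  -- D ⊆ C' ⊂ Base ∪ A', so some x ∈ A' is missing from D
  have hDss : D ⊂ Base ∪ A' := lt_of_le_of_lt hDsub hC'ssub
  obtain ⟨x, hxU, hxD⟩ := Finset.exists_of_ssubset hDss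
  have hxA' : x ∈ A' := by
    rcases Finset.mem_union.mp hxU with h | h
    · exact absurd (hBaseD h) hxD
    · exact h
  have hDsub2 : D ⊆ Base ∪ A'.erase x := by
    intro y hy
    rcases Finset.mem_union.mp (hDss.subset hy) with h | h
    · exact Finset.mem_union_left _ h
    · refine Finset.mem_union_right _ (Finset.mem_erase.mpr ⟨?_, h⟩)
      rintro rfl; exact hxD hy
  exact hA'min x hxA'
    (mono D _ hDsub2
      (Finset.union_subset hBaseE ((Finset.erase_subset _ _).trans (hA'sub.trans hAE))) hDc)
end

section
/- Let Base and A be disjoint subsets of a finite set E with monotonic criterion check such that check(Base ∪ A) holds, and let A' ⊆ A be locally minimal with check(Base ∪ A') holding. If Base contains a core of E, then A' = ∅. -/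
/-- Prop. 2(ii): if `Base` contains a core of `E`, then a locally
minimal `A' ⊆ A` with `check (Base ∪ A')` must be empty. -/
theorem min_with_base_empty {α : Type*} [DecidableEq α] (E : Finset α)
    (check : Finset α → Prop)
    (mono : ∀ A B : Finset α, A ⊆ B → B ⊆ E → check A → check B)
    (Base A : Finset α) (hBaseE : Base ⊆ E) (hAE : A ⊆ E)
    (hdisj : Disjoint Base A) (hBA : check (Base ∪ A))
    (A' : Finset α) (hA'sub : A' ⊆ A)
    (hA'check : check (Base ∪ A'))
    (hA'min : ∀ x ∈ A', ¬ check (Base ∪ (A'.erase x)))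
    (hBaseCore : ∃ C : Finset α, C ⊆ Base ∧ check C ∧ ∀ C' ⊂ C, ¬ check C') :
    A' = ∅ := by
  obtain ⟨C, hCB, hCcheck, -⟩ := hBaseCore
  by_contra h
  obtain ⟨x, hx⟩ := Finset.nonempty_iff_ne_empty.2 h
  exact hA'min x hx (mono C _ (hCB.trans Finset.subset_union_left)
    (Finset.union_subset hBaseE (((Finset.erase_subset _ _).trans hA'sub).trans hAE)) hCcheck)
end

section
/- If a finite set E has exactly one core C under a monotonic criterion, then for every x ∈ C, check(E \ {x}) fails; equivalently, the set Cont = {x ∈ C | check(E \ {x}) holds} is empty. -/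
lemma exists_core_sub {α : Type*} [DecidableEq α] (check : Finset α → Prop)
    (S : Finset α) (hS : check S) :
    ∃ C' ⊆ S, check C' ∧ ∀ D ⊂ C', ¬ check D := by
  induction S using Finset.strongInduction with
  | _ S ih =>
    by_cases h : ∀ D ⊂ S, ¬ check D
    · exact ⟨S, le_refl _, hS, h⟩
    · push_neg at h
      obtain ⟨D, hDS, hD⟩ := h
      obtain ⟨C', h1, h2, h3⟩ := ih D hDS hD
      exact ⟨C', h1.trans hDS.subset, h2, h3⟩

/-- if `E` has exactly one core `C`, then for every `x ∈ C`,
`check (E \ {x})` fails, i.e. `Cont = {x ∈ C | check (E \ {x})}` is empty. -/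
theorem unique_core_cont_empty {α : Type*} [DecidableEq α] (E : Finset α)
    (check : Finset α → Prop)
    (mono : ∀ A B : Finset α, A ⊆ B → B ⊆ E → check A → check B)
    (hE : check E)
    (C : Finset α) (hCE : C ⊆ E) (hC : check C)
    (hCmin : ∀ C' ⊂ C, ¬ check C')
    (huniq : ∀ C' : Finset α, C' ⊆ E → check C' → (∀ D ⊂ C', ¬ check D) → C' = C) :
    ∀ x ∈ C, ¬ check (E.erase x) := by
  intro x hx hchk
  obtain ⟨C', h1, h2, h3⟩ := exists_core_sub check (E.erase x) hchk
  have := huniq C' (h1.trans (E.erase_subset x)) h2 h3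
  subst this
  exact (Finset.notMem_erase x E) (h1 hx)
end

section
/- Let check be a monotonic criterion on subsets of a finite set E with check E holding. If C is a core of E and x ∈ E \ C, then every core of E \ {x} is also a core of E; conversely, every core of E not containing x is a core of E \ {x}. Hence the set of cores of E equals the union of {C₀} with the cores of the punched sets E \ {x} over all x ∈ C₀ with check(E \ {x}) holding, where C₀ is any fixed core of E. -/
/-- A core of `S` w.r.t. `check`: a subset of `S` satisfying `check` such that
removing any single element makes `check` fail. -/
def IsCore {α : Type*} [DecidableEq α] (check : Finset α → Prop)
    (S C : Finset α) : Prop :=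
  C ⊆ S ∧ check C ∧ ∀ x ∈ C, ¬ check (C.erase x)

/-- the structural recursion underlying Punch: cores transfer
between `E` and punched sets `E \ {x}`, and the cores of `E` are exactly `C₀`
together with the cores of the punched sets `E \ {x}` for `x ∈ C₀` with
`check (E \ {x})`. -/
theorem punch_structure {α : Type*} [DecidableEq α] (E : Finset α)
    (check : Finset α → Prop)
    (mono : ∀ A B : Finset α, A ⊆ B → B ⊆ E → check A → check B)
    (hE : check E) :
    (∀ C : Finset α, IsCore check E C → ∀ x ∈ E, x ∉ C →
      ∀ D : Finset α, IsCore check (E.erase x) D → IsCore check E D) ∧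
    (∀ C : Finset α, IsCore check E C → ∀ x, x ∉ C → IsCore check (E.erase x) C) ∧
    (∀ C₀ : Finset α, IsCore check E C₀ →
      ∀ C : Finset α, IsCore check E C ↔
        (C = C₀ ∨ ∃ x ∈ C₀, check (E.erase x) ∧ IsCore check (E.erase x) C)) := by
  have part1 : ∀ C : Finset α, IsCore check E C → ∀ x ∈ E, x ∉ C →
      ∀ D : Finset α, IsCore check (E.erase x) D → IsCore check E D := by
    rintro C _ x _ _ D ⟨hDE, hD, hmin⟩
    exact ⟨hDE.trans (Finset.erase_subset _ _), hD, hmin⟩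
  have part2 : ∀ C : Finset α, IsCore check E C → ∀ x, x ∉ C →
      IsCore check (E.erase x) C := by
    rintro C ⟨hCE, hC, hmin⟩ x hx
    refine ⟨fun y hy => Finset.mem_erase.2 ⟨fun h => hx (h ▸ hy), hCE hy⟩, hC, hmin⟩
  refine ⟨part1, part2, ?_⟩
  rintro C₀ hC₀ C
  constructor
  · intro hC
    by_cases hEq : C = C₀
    · exact Or.inl hEq
    · right
      obtain ⟨hCE, hc, hmin⟩ := hC
      obtain ⟨hC₀E, hc₀, hmin₀⟩ := hC₀
      -- find x ∈ C₀ \ C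
      by_cases hsub : C₀ ⊆ C
      · exfalso
        obtain ⟨y, hyC, hyC₀⟩ := Finset.exists_of_ssubset (hsub.ssubset_of_ne
          (fun h => hEq h.symm))
        exact hmin y hyC (mono C₀ (C.erase y)
          (fun z hz => Finset.mem_erase.2 ⟨fun h => hyC₀ (h ▸ hz), hsub hz⟩)
          ((Finset.erase_subset _ _).trans hCE) hc₀)
      · obtain ⟨x, hxC₀, hxC⟩ := Finset.not_subset.1 hsub
        have hCex : C ⊆ E.erase x :=
          fun y hy => Finset.mem_erase.2 ⟨fun h => hxC (h ▸ hy), hCE hy⟩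
        exact ⟨x, hxC₀, mono C (E.erase x) hCex (Finset.erase_subset _ _) hc,
          part2 C ⟨hCE, hc, hmin⟩ x hxC⟩
  · rintro (rfl | ⟨x, hxC₀, _, hD⟩)
    · exact hC₀
    · exact ⟨hD.1.trans (Finset.erase_subset _ _), hD.2.1, hD.2.2⟩
end

section
/- Let check be monotonic on subsets of a finite set E and suppose E = I ∪ T ∪ J is a partition of E into three pairwise disjoint sets. Let J' ⊆ J be locally minimal with check(I ∪ T ∪ J') holding; let T' ⊆ T be locally minimal with check(I ∪ T' ∪ J') holding; let I' ⊆ I be locally minimal with check(I' ∪ T' ∪ J') holding. Then I' ∪ T' ∪ J' is a core of E. -/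
/-- compositional correctness of QuickCore: given a partition
`E = I ∪ T ∪ J` into pairwise disjoint parts, successively minimizing `J`,
then `T`, then `I` (each relative to the others) yields a core of `E`. -/
theorem quickcore_compositional {α : Type*} [DecidableEq α]
    (check : Finset α → Prop) (I T J E : Finset α)
    (hE : E = I ∪ T ∪ J)
    (hIT : Disjoint I T) (hIJ : Disjoint I J) (hTJ : Disjoint T J)
    (mono : ∀ A B : Finset α, A ⊆ B → B ⊆ E → check A → check B)
    (hcheckE : check E)
    (J' : Finset α) (hJ'sub : J' ⊆ J)
    (hJ'check : check (I ∪ T ∪ J'))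
    (hJ'min : ∀ x ∈ J', ¬ check (I ∪ T ∪ (J'.erase x)))
    (T' : Finset α) (hT'sub : T' ⊆ T)
    (hT'check : check (I ∪ T' ∪ J'))
    (hT'min : ∀ x ∈ T', ¬ check (I ∪ (T'.erase x) ∪ J'))
    (I' : Finset α) (hI'sub : I' ⊆ I)
    (hI'check : check (I' ∪ T' ∪ J'))
    (hI'min : ∀ x ∈ I', ¬ check ((I'.erase x) ∪ T' ∪ J')) :
    check (I' ∪ T' ∪ J') ∧
    ∀ x ∈ I' ∪ T' ∪ J', ¬ check ((I' ∪ T' ∪ J').erase x) := by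
  refine ⟨hI'check, ?_⟩
  intro x hx
  have hsubE : I' ∪ T' ∪ J' ⊆ E := by
    rw [hE]
    exact Finset.union_subset_union (Finset.union_subset_union hI'sub hT'sub) hJ'sub
  simp only [Finset.mem_union] at hx
  rcases hx with (hxI | hxT) | hxJ
  · have hxnT : x ∉ T' := fun h => Finset.disjoint_left.mp hIT (hI'sub hxI) (hT'sub h)
    have hxnJ : x ∉ J' := fun h => Finset.disjoint_left.mp hIJ (hI'sub hxI) (hJ'sub h)
    have heq : (I' ∪ T' ∪ J').erase x = (I'.erase x) ∪ T' ∪ J' := by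
      rw [Finset.erase_union_distrib, Finset.erase_union_distrib,
        Finset.erase_eq_of_notMem hxnT, Finset.erase_eq_of_notMem hxnJ]
    rw [heq]
    exact hI'min x hxI
  · have hxnI : x ∉ I' := fun h => Finset.disjoint_left.mp hIT (hI'sub h) (hT'sub hxT)
    have hxnJ : x ∉ J' := fun h => Finset.disjoint_left.mp hTJ (hT'sub hxT) (hJ'sub h)
    have heq : (I' ∪ T' ∪ J').erase x = I' ∪ (T'.erase x) ∪ J' := by
      rw [Finset.erase_union_distrib, Finset.erase_union_distrib,
        Finset.erase_eq_of_notMem hxnI, Finset.erase_eq_of_notMem hxnJ]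
    rw [heq]
    intro hc
    exact hT'min x hxT (mono _ _
      (Finset.union_subset_union (Finset.union_subset_union hI'sub (Finset.Subset.refl _)) (Finset.Subset.refl _))
      (by rw [hE]; exact Finset.union_subset_union (Finset.union_subset_union (Finset.Subset.refl _) ((Finset.erase_subset x T').trans hT'sub)) hJ'sub) hc)
  · have hxnI : x ∉ I' := fun h => Finset.disjoint_left.mp hIJ (hI'sub h) (hJ'sub hxJ)
    have hxnT : x ∉ T' := fun h => Finset.disjoint_left.mp hTJ (hT'sub h) (hJ'sub hxJ)
    have heq : (I' ∪ T' ∪ J').erase x = I' ∪ T' ∪ (J'.erase x) := by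
      rw [Finset.erase_union_distrib, Finset.erase_union_distrib,
        Finset.erase_eq_of_notMem hxnI, Finset.erase_eq_of_notMem hxnT]
    rw [heq]
    intro hc
    exact hJ'min x hxJ (mono _ _
      (Finset.union_subset_union (Finset.union_subset_union hI'sub hT'sub) (Finset.Subset.refl _))
      (by rw [hE]; exact Finset.union_subset_union (Finset.Subset.refl _) ((Finset.erase_subset x J').trans hJ'sub)) hc)
end

section
/- Linear minimization computes a core: given a finite set E = {x₁,…,xₙ} (in some fixed order) satisfying a monotonic criterion check, define a sequence of sets by S₀ = E and, for i from 1 to n, Sᵢ = Sᵢ₋₁ \ {xᵢ} if check(Sᵢ₋₁ \ {xᵢ}) holds, and Sᵢ = Sᵢ₋₁ otherwise. Then Sₙ is a core of E. -/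
/-- correctness of linear minimization (`LinearMin`): going over
the elements of `E` in a fixed order, removing each element whenever the
criterion still holds without it, ends with a core of `E`. -/
theorem linear_min_core {α : Type*} [DecidableEq α]
    (check : Finset α → Prop) (E : Finset α)
    (mono : ∀ A B : Finset α, A ⊆ B → B ⊆ E → check A → check B)
    (hE : check E)
    (l : List α) (hnodup : l.Nodup) (hlE : l.toFinset = E)
    (S : ℕ → Finset α) (hS0 : S 0 = E)
    (hstep : ∀ i (h : i < l.length),
      (check ((S i).erase (l.get ⟨i, h⟩)) →
        S (i + 1) = (S i).erase (l.get ⟨i, h⟩)) ∧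
      (¬ check ((S i).erase (l.get ⟨i, h⟩)) → S (i + 1) = S i)) :
    S l.length ⊆ E ∧ check (S l.length) ∧
    ∀ x ∈ S l.length, ¬ check ((S l.length).erase x) := by
  classical
  set n := l.length with hn
  -- each step shrinks
  have step_sub : ∀ i, i < n → S (i + 1) ⊆ S i := by
    intro i hi
    by_cases hc : check ((S i).erase (l.get ⟨i, hi⟩))
    · rw [(hstep i hi).1 hc]; exact Finset.erase_subset _ _
    · rw [(hstep i hi).2 hc]
  -- chain inclusion
  have chain : ∀ j, j ≤ n → ∀ i, i ≤ j → S j ⊆ S i := by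
    intro j
    induction j with
    | zero => intro _ i hi; rw [Nat.le_zero.mp hi]
    | succ k ih =>
      intro hk i hi
      rcases Nat.eq_or_lt_of_le hi with h | h
      · subst h; exact Finset.Subset.refl _
      · exact (step_sub k (by omega)).trans (ih (by omega) i (by omega))
  have subE : ∀ i, i ≤ n → S i ⊆ E := by
    intro i hi
    have := chain i hi 0 (Nat.zero_le _)
    rwa [hS0] at this
  have chk : ∀ i, i ≤ n → check (S i) := by
    intro i
    induction i with
    | zero => intro _; rw [hS0]; exact hE
    | succ k ih =>
      intro hk
      by_cases hc : check ((S k).erase (l.get ⟨k, by omega⟩))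
      · rw [(hstep k (by omega)).1 hc]; exact hc
      · rw [(hstep k (by omega)).2 hc]; exact ih (by omega)
  refine ⟨subE n le_rfl, chk n le_rfl, ?_⟩
  intro x hx hcx
  have hxE : x ∈ E := subE n le_rfl hx
  have hxl : x ∈ l := by
    rw [← hlE] at hxE; simpa using hxE
  obtain ⟨j, hj⟩ := List.mem_iff_get.mp hxl
  have hjlt : (j : ℕ) < n := j.isLt
  by_cases hc : check ((S j).erase (l.get j))
  · -- then x removed at step j, contradiction with x ∈ S n
    have hSn : S n ⊆ S (j + 1) := chain n le_rfl (j + 1) (by omega)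
    have : x ∈ S (j + 1) := hSn hx
    rw [(hstep j hjlt).1 hc] at this
    rw [hj] at this
    exact (Finset.notMem_erase x _) this
  · -- check failed at step j; monotonicity gives contradiction
    have hSn : S n ⊆ S j := chain n le_rfl j (by omega)
    have hsub : (S n).erase x ⊆ (S j).erase (l.get j) := by
      rw [hj]; exact Finset.erase_subset_erase _ hSn
    have hEj : (S j).erase (l.get j) ⊆ E :=
      (Finset.erase_subset _ _).trans (subE j (by omega))
    exact hc (mono _ _ hsub hEj hcx)
end
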